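/- For any normalized Hochschild (2n−1)-cochain γ of the Weyl algebra A_n with values in the dual bimodule A_n* (right action twisted by the parity automorphism), the coboundary evaluated on the antisymmetrized chain y^1∧⋯∧y^{2n} equals (∂γ)(y^1∧⋯∧y^{2n}) = 2 Σ_{k=1}^{2n} (−1)^{k+1} y^k · γ(y^1∧⋯∧ŷ^k∧⋯∧y^{2n}), where the product with y^k is ordinary multiplication of power series; in particular (∂γ)(y^1∧⋯∧y^{2n}) vanishes at y = 0. -/

import Mathlib

open MvPolynomial

/-! The polynomial Weyl algebra `A_N = ℂ[y^1,…,y^N]` with Moyal star product,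
its dual module `A_N* = ℂ[[y^1,…,y^N]]` with left Moyal action and right Moyal
action twisted by the parity automorphism, and the Hochschild differential. -/

variable (N : ℕ)

/-- The single-contraction bidifferential operator `Σ π^{jk} ∂_{y^j} ⊗ ∂_{y^k}`
on polynomials in a doubled set of variables. -/
noncomputable def moyalStep (π : Matrix (Fin N) (Fin N) ℂ) :
    Module.End ℂ (MvPolynomial (Fin N ⊕ Fin N) ℂ) :=
  ∑ j : Fin N, ∑ k : Fin N,
    π j k • ((pderiv (Sum.inl j)).toLinearMap ∘ₗ (pderiv (Sum.inr k)).toLinearMap)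

/-- The Moyal star product on the polynomial Weyl algebra. -/
noncomputable def moyal (π : Matrix (Fin N) (Fin N) ℂ)
    (a b : MvPolynomial (Fin N) ℂ) : MvPolynomial (Fin N) ℂ :=
  ∑ m ∈ Finset.range (a.totalDegree + 1),
    ((Complex.I ^ m) / (m.factorial : ℂ)) •
      (rename (Sum.elim id id))
        (((moyalStep N π) ^ m) (rename Sum.inl a * rename Sum.inr b))

/-- The parity automorphism `a(y) ↦ a(-y)` of the polynomial algebra. -/
noncomputable def parityMap :
    MvPolynomial (Fin N) ℂ →ₐ[ℂ] MvPolynomial (Fin N) ℂ :=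
  aeval fun j => -(X j)

/-- Partial derivative on formal power series in doubled variables. -/
noncomputable def pdT (v : Fin N ⊕ Fin N)
    (g : MvPowerSeries (Fin N ⊕ Fin N) ℂ) : MvPowerSeries (Fin N ⊕ Fin N) ℂ :=
  fun e => ((e v : ℂ) + 1) * g (e + Finsupp.single v 1)

/-- The single-contraction operator on power series in doubled variables. -/
noncomputable def stepT (π : Matrix (Fin N) (Fin N) ℂ)
    (g : MvPowerSeries (Fin N ⊕ Fin N) ℂ) : MvPowerSeries (Fin N ⊕ Fin N) ℂ :=
  fun e => ∑ j : Fin N, ∑ k : Fin N,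
    π j k * pdT N (Sum.inl j) (pdT N (Sum.inr k) g) e

open scoped Classical in
/-- A power series in `y` placed in the left (`Sum.inl`) copy of the doubled
variables. -/
noncomputable def embL (f : MvPowerSeries (Fin N) ℂ) :
    MvPowerSeries (Fin N ⊕ Fin N) ℂ :=
  fun e => if ∀ v, e (Sum.inr v) = 0
    then f (Finsupp.comapDomain Sum.inl e Sum.inl_injective.injOn) else 0

open scoped Classical in
/-- A power series in `y` placed in the right (`Sum.inr`) copy of the doubled
variables. -/
noncomputable def embR (f : MvPowerSeries (Fin N) ℂ) :
    MvPowerSeries (Fin N ⊕ Fin N) ℂ :=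
  fun e => if ∀ v, e (Sum.inl v) = 0
    then f (Finsupp.comapDomain Sum.inr e Sum.inr_injective.injOn) else 0

/-- Identify the two copies of the variables (the multiplication map). -/
noncomputable def collapseT (g : MvPowerSeries (Fin N ⊕ Fin N) ℂ) :
    MvPowerSeries (Fin N) ℂ :=
  fun e => ∑ p ∈ Finset.HasAntidiagonal.antidiagonal e,
    g (Finsupp.mapDomain Sum.inl p.1 + Finsupp.mapDomain Sum.inr p.2)

/-- Left Moyal action `a ∗ f` of a polynomial `a` on a formal power series `f`;
the exponential series truncates at `totalDegree a`. -/
noncomputable def leftStar (π : Matrix (Fin N) (Fin N) ℂ)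
    (a : MvPolynomial (Fin N) ℂ) (f : MvPowerSeries (Fin N) ℂ) :
    MvPowerSeries (Fin N) ℂ :=
  ∑ m ∈ Finset.range (a.totalDegree + 1),
    ((Complex.I ^ m) / (m.factorial : ℂ)) •
      collapseT N ((stepT N π)^[m]
        (((rename Sum.inl a : MvPolynomial (Fin N ⊕ Fin N) ℂ) :
            MvPowerSeries (Fin N ⊕ Fin N) ℂ) * embR N f))

/-- Right Moyal action `f ∗ a` of a polynomial `a` on a formal power series `f`. -/
noncomputable def rightStar (π : Matrix (Fin N) (Fin N) ℂ)
    (f : MvPowerSeries (Fin N) ℂ) (a : MvPolynomial (Fin N) ℂ) :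
    MvPowerSeries (Fin N) ℂ :=
  ∑ m ∈ Finset.range (a.totalDegree + 1),
    ((Complex.I ^ m) / (m.factorial : ℂ)) •
      collapseT N ((stepT N π)^[m]
        (embL N f * ((rename Sum.inr a : MvPolynomial (Fin N ⊕ Fin N) ℂ) :
            MvPowerSeries (Fin N ⊕ Fin N) ℂ)))

/-- Multiplication by `y^k` (ordinary commutative multiplication) on power series. -/
noncomputable def mulY (k : Fin N) (f : MvPowerSeries (Fin N) ℂ) :
    MvPowerSeries (Fin N) ℂ :=
  fun e => if 1 ≤ e k then f (e - Finsupp.single k 1) else 0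

/-- The Hochschild differential for cochains of the Weyl algebra `A_N` with
values in the dual module `A_N* = ℂ[[y]]` (left Moyal action, right Moyal
action twisted by the parity automorphism `ã(y) = a(-y)`). -/
noncomputable def hochD (π : Matrix (Fin N) (Fin N) ℂ) {p : ℕ}
    (γ : MultilinearMap ℂ (fun _ : Fin p => MvPolynomial (Fin N) ℂ)
      (MvPowerSeries (Fin N) ℂ)) :
    (Fin (p + 1) → MvPolynomial (Fin N) ℂ) → MvPowerSeries (Fin N) ℂ :=
  fun a =>
    leftStar N π (a 0) (γ fun i => a i.succ) +
    ∑ j : Fin p, ((-1 : ℤ) ^ (j : ℕ)) •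
      γ (fun m : Fin p =>
        if (m : ℕ) < (j : ℕ) then a m.castSucc
        else if (m : ℕ) = (j : ℕ) then moyal N π (a m.castSucc) (a m.succ)
        else a m.succ) +
    ((-1 : ℤ) ^ (p + 1)) •
      rightStar N π (γ fun i => a i.castSucc) (parityMap N (a (Fin.last p)))

/-- A cochain is normalized if it vanishes whenever one of its arguments is `1`. -/
def IsNormalized {p : ℕ}
    (γ : MultilinearMap ℂ (fun _ : Fin p => MvPolynomial (Fin N) ℂ)
      (MvPowerSeries (Fin N) ℂ)) : Prop :=
  ∀ v, (∃ i, v i = 1) → γ v = 0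

/-- Evaluation of a `N`-ary function on the antisymmetrized chain
`y^1 ∧ ⋯ ∧ y^N`. -/
noncomputable def wedgeEval
    (F : (Fin N → MvPolynomial (Fin N) ℂ) → MvPowerSeries (Fin N) ℂ) :
    MvPowerSeries (Fin N) ℂ :=
  ∑ σ : Equiv.Perm (Fin N), (Equiv.Perm.sign σ : ℤ) • F fun m => X (σ m)
section AuxA
open Finsupp

variable {N : ℕ}

lemma splitL (p q : Fin N →₀ ℕ) (v : Fin N) :
    ((mapDomain Sum.inl p + mapDomain Sum.inr q : (Fin N ⊕ Fin N) →₀ ℕ)) (Sum.inl v) = p v := by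
  rw [Finsupp.add_apply, Finsupp.mapDomain_apply Sum.inl_injective,
    Finsupp.mapDomain_notin_range _ _ (by simp), add_zero]

lemma splitR (p q : Fin N →₀ ℕ) (v : Fin N) :
    ((mapDomain Sum.inl p + mapDomain Sum.inr q : (Fin N ⊕ Fin N) →₀ ℕ)) (Sum.inr v) = q v := by
  rw [Finsupp.add_apply, Finsupp.mapDomain_apply Sum.inr_injective,
    Finsupp.mapDomain_notin_range _ _ (by simp), zero_add]

lemma embR_split (f : MvPowerSeries (Fin N) ℂ) (P Q : Fin N →₀ ℕ) :
    embR N f (mapDomain Sum.inl P + mapDomain Sum.inr Q)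
      = if P = 0 then f Q else 0 := by
  classical
  rw [embR]
  by_cases h : P = 0
  · rw [if_pos (fun v => by rw [splitL, h]; rfl), if_pos h]
    congr 1
    ext v
    rw [Finsupp.comapDomain_apply, splitR]
  · rw [if_neg, if_neg h]
    intro hc
    exact h (Finsupp.ext fun v => by rw [← splitL P Q v]; exact hc v)

lemma embL_split (f : MvPowerSeries (Fin N) ℂ) (P Q : Fin N →₀ ℕ) :
    embL N f (mapDomain Sum.inl P + mapDomain Sum.inr Q)
      = if Q = 0 then f P else 0 := by
  classical
  rw [embL]
  by_cases h : Q = 0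
  · rw [if_pos (fun v => by rw [splitR, h]; rfl), if_pos h]
    congr 1
    ext v
    rw [Finsupp.comapDomain_apply, splitL]
  · rw [if_neg, if_neg h]
    intro hc
    exact h (Finsupp.ext fun v => by rw [← splitR P Q v]; exact hc v)

lemma split_single_l (k : Fin N) :
    (Finsupp.single (Sum.inl k : Fin N ⊕ Fin N) 1 : (Fin N ⊕ Fin N) →₀ ℕ)
      = mapDomain Sum.inl (Finsupp.single k 1) := (Finsupp.mapDomain_single).symm

lemma split_single_r (k : Fin N) :
    (Finsupp.single (Sum.inr k : Fin N ⊕ Fin N) 1 : (Fin N ⊕ Fin N) →₀ ℕ)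
      = mapDomain Sum.inr (Finsupp.single k 1) := (Finsupp.mapDomain_single).symm

lemma split_add (p q p' q' : Fin N →₀ ℕ) :
    (mapDomain Sum.inl (p + p') + mapDomain Sum.inr (q + q') : (Fin N ⊕ Fin N) →₀ ℕ)
      = (mapDomain Sum.inl p + mapDomain Sum.inr q)
        + (mapDomain Sum.inl p' + (mapDomain Sum.inr q')) := by
  rw [Finsupp.mapDomain_add, Finsupp.mapDomain_add]; abel

/-- Coefficient of `X (inl k) * embR f` at a split exponent. -/
lemma coeff_XL_mul (k : Fin N) (f : MvPowerSeries (Fin N) ℂ) (P Q : Fin N →₀ ℕ) :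
    ((((rename Sum.inl (X k) : MvPolynomial (Fin N ⊕ Fin N) ℂ)) :
        MvPowerSeries (Fin N ⊕ Fin N) ℂ) * embR N f)
      (mapDomain Sum.inl P + mapDomain Sum.inr Q)
      = if P = Finsupp.single k 1 then f Q else 0 := by
  classical
  rw [rename_X, MvPolynomial.coe_X]
  show MvPowerSeries.coeff _ (MvPowerSeries.X (Sum.inl k) * embR N f) = _
  rw [show (MvPowerSeries.X (Sum.inl k) : MvPowerSeries (Fin N ⊕ Fin N) ℂ)
      = MvPowerSeries.monomial (Finsupp.single (Sum.inl k) 1) 1 from rfl,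
    MvPowerSeries.coeff_monomial_mul]
  have hcond : (Finsupp.single (Sum.inl k : Fin N ⊕ Fin N) 1
      ≤ mapDomain Sum.inl P + mapDomain Sum.inr Q) ↔ Finsupp.single k 1 ≤ P := by
    rw [Finsupp.single_le_iff, Finsupp.single_le_iff, splitL]
  by_cases h : Finsupp.single k 1 ≤ P
  · rw [if_pos (hcond.mpr h), one_mul]
    have harg : (mapDomain Sum.inl P + mapDomain Sum.inr Q : (Fin N ⊕ Fin N) →₀ ℕ)
        - Finsupp.single (Sum.inl k) 1
        = mapDomain Sum.inl (P - Finsupp.single k 1) + mapDomain Sum.inr Q := by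
      ext v
      rcases v with v | v
      · rw [Finsupp.tsub_apply, splitL, splitL, Finsupp.tsub_apply, split_single_l,
          Finsupp.mapDomain_apply Sum.inl_injective]
      · rw [Finsupp.tsub_apply, splitR, splitR, split_single_l,
          Finsupp.mapDomain_notin_range _ _ (by simp), Nat.sub_zero]
    show embR N f _ = _
    rw [harg, embR_split]
    have heq : (P - Finsupp.single k 1 = 0) ↔ (P = Finsupp.single k 1) :=
      ⟨fun h0 => le_antisymm (tsub_eq_zero_iff_le.mp h0) h,
       fun h0 => by rw [h0]; simp⟩
    simp only [heq]
  · rw [if_neg (fun hc => h (hcond.mp hc))]; rw [if_neg (fun hc : P = Finsupp.single k 1 => h (ge_of_eq hc))]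

/-- Coefficient of `embL f * X (inr k)` at a split exponent. -/
lemma coeff_mul_XR (k : Fin N) (f : MvPowerSeries (Fin N) ℂ) (P Q : Fin N →₀ ℕ) :
    (embL N f * (((rename Sum.inr (X k) : MvPolynomial (Fin N ⊕ Fin N) ℂ)) :
        MvPowerSeries (Fin N ⊕ Fin N) ℂ))
      (mapDomain Sum.inl P + mapDomain Sum.inr Q)
      = if Q = Finsupp.single k 1 then f P else 0 := by
  classical
  rw [rename_X, MvPolynomial.coe_X]
  show MvPowerSeries.coeff _ (embL N f * MvPowerSeries.X (Sum.inr k)) = _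
  rw [show (MvPowerSeries.X (Sum.inr k) : MvPowerSeries (Fin N ⊕ Fin N) ℂ)
      = MvPowerSeries.monomial (Finsupp.single (Sum.inr k) 1) 1 from rfl,
    MvPowerSeries.coeff_mul_monomial]
  have hcond : (Finsupp.single (Sum.inr k : Fin N ⊕ Fin N) 1
      ≤ mapDomain Sum.inl P + mapDomain Sum.inr Q) ↔ Finsupp.single k 1 ≤ Q := by
    rw [Finsupp.single_le_iff, Finsupp.single_le_iff, splitR]
  by_cases h : Finsupp.single k 1 ≤ Q
  · rw [if_pos (hcond.mpr h), mul_one]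
    have harg : (mapDomain Sum.inl P + mapDomain Sum.inr Q : (Fin N ⊕ Fin N) →₀ ℕ)
        - Finsupp.single (Sum.inr k) 1
        = mapDomain Sum.inl P + mapDomain Sum.inr (Q - Finsupp.single k 1) := by
      ext v
      rcases v with v | v
      · rw [Finsupp.tsub_apply, splitL, splitL, split_single_r,
          Finsupp.mapDomain_notin_range _ _ (by simp), Nat.sub_zero]
      · rw [Finsupp.tsub_apply, splitR, splitR, Finsupp.tsub_apply, split_single_r,
          Finsupp.mapDomain_apply Sum.inr_injective]
    show embL N f _ = _
    rw [harg, embL_split]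
    have heq : (Q - Finsupp.single k 1 = 0) ↔ (Q = Finsupp.single k 1) :=
      ⟨fun h0 => le_antisymm (tsub_eq_zero_iff_le.mp h0) h,
       fun h0 => by rw [h0]; simp⟩
    simp only [heq]
  · rw [if_neg (fun hc => h (hcond.mp hc))]; rw [if_neg (fun hc : Q = Finsupp.single k 1 => h (ge_of_eq hc))]

end AuxA
section AuxB
open Finsupp

variable {N : ℕ}

lemma split_add_singles (p q : Fin N →₀ ℕ) (j k' : Fin N) :
    ((mapDomain Sum.inl p + mapDomain Sum.inr q : (Fin N ⊕ Fin N) →₀ ℕ)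
        + Finsupp.single (Sum.inl j) 1) + Finsupp.single (Sum.inr k') 1
      = mapDomain Sum.inl (p + Finsupp.single j 1)
        + mapDomain Sum.inr (q + Finsupp.single k' 1) := by
  rw [split_add, split_single_l, split_single_r]; abel

lemma add_single_eq_single {p : Fin N →₀ ℕ} {j k : Fin N} :
    p + Finsupp.single j 1 = Finsupp.single k 1 ↔ p = 0 ∧ j = k := by
  constructor
  · intro h
    have hj : j = k := by
      by_contra hne
      have := Finsupp.ext_iff.mp h j
      rw [Finsupp.add_apply, Finsupp.single_eq_same,
        Finsupp.single_eq_of_ne' (Ne.symm hne)] at this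
      omega
    subst hj
    exact ⟨add_eq_right.mp h, rfl⟩
  · rintro ⟨h0, hj⟩; rw [h0, hj, zero_add]


lemma split_addsingle_r (p q : Fin N →₀ ℕ) (j k' : Fin N) :
    ((mapDomain Sum.inl p + mapDomain Sum.inr q
      + Finsupp.single (Sum.inl j) 1 : (Fin N ⊕ Fin N) →₀ ℕ)) (Sum.inr k') = q k' := by
  classical
  rw [Finsupp.add_apply, Finsupp.single_apply, if_neg (by simp), add_zero, splitR]

/-- the inner series in `leftStar (X k) f` -/
lemma stepT_gL_split (π : Matrix (Fin N) (Fin N) ℂ) (k : Fin N)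
    (f : MvPowerSeries (Fin N) ℂ) (p q : Fin N →₀ ℕ) :
    stepT N π ((((rename Sum.inl (X k) : MvPolynomial (Fin N ⊕ Fin N) ℂ)) :
        MvPowerSeries (Fin N ⊕ Fin N) ℂ) * embR N f)
      (mapDomain Sum.inl p + mapDomain Sum.inr q)
      = if p = 0 then
          ∑ j : Fin N, π k j * ((((q j : ℕ) : ℂ) + 1) * f (q + Finsupp.single j 1))
        else 0 := by
  classical
  simp only [stepT, pdT]
  by_cases hp : p = 0
  · subst hp
    rw [if_pos rfl]
    simp only [split_add_singles, coeff_XL_mul, zero_add,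
      Finsupp.single_left_inj (one_ne_zero (α := ℕ)), splitL, split_addsingle_r,
      Finsupp.coe_zero, Pi.zero_apply, Nat.cast_zero]
    simp only [mul_ite, mul_zero, Finset.sum_ite_irrel, Finset.sum_const_zero,
      Finset.sum_ite_eq', Finset.mem_univ, if_true]
    exact Finset.sum_congr rfl fun x _ => by ring
  · rw [if_neg hp]
    refine Finset.sum_eq_zero fun j _ => Finset.sum_eq_zero fun k' _ => ?_
    rw [split_add_singles, coeff_XL_mul, if_neg (fun hc => hp (add_single_eq_single.mp hc).1),
      mul_zero, mul_zero, mul_zero]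

lemma split_addsingle_l (p q : Fin N →₀ ℕ) (j k' : Fin N) :
    ((mapDomain Sum.inl p + mapDomain Sum.inr q
      + Finsupp.single (Sum.inl j) 1 : (Fin N ⊕ Fin N) →₀ ℕ)) (Sum.inl k') = p k' + (if j = k' then 1 else 0) := by
  classical
  rw [Finsupp.add_apply, Finsupp.single_apply, splitL]
  simp

/-- the inner series in `rightStar f (X k)` -/
lemma stepT_gR_split (π : Matrix (Fin N) (Fin N) ℂ) (k : Fin N)
    (f : MvPowerSeries (Fin N) ℂ) (p q : Fin N →₀ ℕ) :
    stepT N π (embL N f * (((rename Sum.inr (X k) : MvPolynomial (Fin N ⊕ Fin N) ℂ)) :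
        MvPowerSeries (Fin N ⊕ Fin N) ℂ))
      (mapDomain Sum.inl p + mapDomain Sum.inr q)
      = if q = 0 then
          ∑ j : Fin N, π j k * ((((p j : ℕ) : ℂ) + 1) * f (p + Finsupp.single j 1))
        else 0 := by
  classical
  simp only [stepT, pdT]
  by_cases hq : q = 0
  · subst hq
    rw [if_pos rfl]
    simp only [split_add_singles, coeff_mul_XR, zero_add,
      Finsupp.single_left_inj (one_ne_zero (α := ℕ)), splitL, split_addsingle_r,
      Finsupp.coe_zero, Pi.zero_apply, Nat.cast_zero]
    simp only [mul_ite, mul_zero, Finset.sum_ite_eq', Finset.mem_univ, if_true]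
    exact Finset.sum_congr rfl fun x _ => by ring
  · rw [if_neg hq]
    refine Finset.sum_eq_zero fun j _ => Finset.sum_eq_zero fun k' _ => ?_
    rw [split_add_singles, coeff_mul_XR, if_neg (fun hc => hq (add_single_eq_single.mp hc).1),
      mul_zero, mul_zero, mul_zero]

lemma collapse_step_L (π : Matrix (Fin N) (Fin N) ℂ) (k : Fin N)
    (f : MvPowerSeries (Fin N) ℂ) (e : Fin N →₀ ℕ) :
    collapseT N (stepT N π ((((rename Sum.inl (X k) : MvPolynomial (Fin N ⊕ Fin N) ℂ)) :
        MvPowerSeries (Fin N ⊕ Fin N) ℂ) * embR N f)) e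
      = ∑ j : Fin N, π k j * ((((e j : ℕ) : ℂ) + 1) * f (e + Finsupp.single j 1)) := by
  classical
  rw [collapseT]
  rw [Finset.sum_congr rfl fun pq _ => stepT_gL_split π k f pq.1 pq.2]
  rw [Finset.sum_eq_single_of_mem ((0 : Fin N →₀ ℕ), e)
    (Finset.HasAntidiagonal.mem_antidiagonal.mpr (zero_add e))
    (fun b hb hne => by
      rw [if_neg]
      intro h0
      apply hne
      have := Finset.HasAntidiagonal.mem_antidiagonal.mp hb
      rw [h0, zero_add] at this
      rw [Prod.ext_iff]; exact ⟨h0, this⟩), if_pos rfl]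

lemma collapse_step_R (π : Matrix (Fin N) (Fin N) ℂ) (k : Fin N)
    (f : MvPowerSeries (Fin N) ℂ) (e : Fin N →₀ ℕ) :
    collapseT N (stepT N π (embL N f * (((rename Sum.inr (X k) : MvPolynomial (Fin N ⊕ Fin N) ℂ)) :
        MvPowerSeries (Fin N ⊕ Fin N) ℂ))) e
      = ∑ j : Fin N, π j k * ((((e j : ℕ) : ℂ) + 1) * f (e + Finsupp.single j 1)) := by
  classical
  rw [collapseT]
  rw [Finset.sum_congr rfl fun pq _ => stepT_gR_split π k f pq.1 pq.2]
  rw [Finset.sum_eq_single_of_mem ((e : Fin N →₀ ℕ), (0 : Fin N →₀ ℕ))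
    (Finset.HasAntidiagonal.mem_antidiagonal.mpr (add_zero e))
    (fun b hb hne => by
      rw [if_neg]
      intro h0
      apply hne
      have := Finset.HasAntidiagonal.mem_antidiagonal.mp hb
      rw [h0, add_zero] at this
      rw [Prod.ext_iff]; exact ⟨this, h0⟩), if_pos rfl]

lemma collapse_m0_L (k : Fin N) (f : MvPowerSeries (Fin N) ℂ) (e : Fin N →₀ ℕ) :
    collapseT N ((((rename Sum.inl (X k) : MvPolynomial (Fin N ⊕ Fin N) ℂ)) :
        MvPowerSeries (Fin N ⊕ Fin N) ℂ) * embR N f) e = mulY N k f e := by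
  classical
  rw [collapseT]
  rw [Finset.sum_congr rfl fun pq _ => coeff_XL_mul k f pq.1 pq.2]
  rw [mulY]
  by_cases h : Finsupp.single k 1 ≤ e
  · rw [Finset.sum_eq_single_of_mem (Finsupp.single k 1, e - Finsupp.single k 1)
      (Finset.HasAntidiagonal.mem_antidiagonal.mpr (add_tsub_cancel_of_le h))
      (fun b hb hne => by
        rw [if_neg]
        intro h0
        apply hne
        have := Finset.HasAntidiagonal.mem_antidiagonal.mp hb
        rw [h0] at this
        have h2 : b.2 = e - Finsupp.single k 1 := by
          rw [← this, add_tsub_cancel_left]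
        rw [Prod.ext_iff]; exact ⟨h0, h2⟩), if_pos rfl,
      if_pos (Finsupp.single_le_iff.mp h)]
  · rw [if_neg (fun hc => h (Finsupp.single_le_iff.mpr hc))]
    refine Finset.sum_eq_zero fun b hb => ?_
    rw [if_neg]
    intro h0
    apply h
    have := Finset.HasAntidiagonal.mem_antidiagonal.mp hb
    rw [← this, h0]
    exact le_self_add

lemma collapse_m0_R (k : Fin N) (f : MvPowerSeries (Fin N) ℂ) (e : Fin N →₀ ℕ) :
    collapseT N (embL N f * (((rename Sum.inr (X k) : MvPolynomial (Fin N ⊕ Fin N) ℂ)) :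
        MvPowerSeries (Fin N ⊕ Fin N) ℂ)) e = mulY N k f e := by
  classical
  rw [collapseT]
  rw [Finset.sum_congr rfl fun pq _ => coeff_mul_XR k f pq.1 pq.2]
  rw [mulY]
  by_cases h : Finsupp.single k 1 ≤ e
  · rw [Finset.sum_eq_single_of_mem (e - Finsupp.single k 1, Finsupp.single k 1)
      (Finset.HasAntidiagonal.mem_antidiagonal.mpr (tsub_add_cancel_of_le h))
      (fun b hb hne => by
        rw [if_neg]
        intro h0
        apply hne
        have := Finset.HasAntidiagonal.mem_antidiagonal.mp hb
        rw [h0] at this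
        have h2 : b.1 = e - Finsupp.single k 1 := by
          rw [← this, add_tsub_cancel_right]
        rw [Prod.ext_iff]; exact ⟨h2, h0⟩), if_pos rfl,
      if_pos (Finsupp.single_le_iff.mp h)]
  · rw [if_neg (fun hc => h (Finsupp.single_le_iff.mpr hc))]
    refine Finset.sum_eq_zero fun b hb => ?_
    rw [if_neg]
    intro h0
    apply h
    have := Finset.HasAntidiagonal.mem_antidiagonal.mp hb
    rw [← this, h0]
    exact le_add_self


lemma psum_apply {α : Type*} (s : Finset α) (F : α → MvPowerSeries (Fin N) ℂ)
    (e : Fin N →₀ ℕ) : (∑ a ∈ s, F a) e = ∑ a ∈ s, F a e :=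
  map_sum (MvPowerSeries.coeff e) F s

lemma psmul_apply (c : ℂ) (g : MvPowerSeries (Fin N) ℂ) (e : Fin N →₀ ℕ) :
    (c • g) e = c * g e := rfl

lemma pzsmul_apply (c : ℤ) (g : MvPowerSeries (Fin N) ℂ) (e : Fin N →₀ ℕ) :
    (c • g) e = c • g e := rfl

lemma padd_apply (g h : MvPowerSeries (Fin N) ℂ) (e : Fin N →₀ ℕ) :
    (g + h) e = g e + h e := rfl

lemma leftStar_X_apply (π : Matrix (Fin N) (Fin N) ℂ) (k : Fin N)
    (f : MvPowerSeries (Fin N) ℂ) (e : Fin N →₀ ℕ) :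
    leftStar N π (X k) f e = mulY N k f e
      + Complex.I * ∑ j : Fin N, π k j * ((((e j : ℕ) : ℂ) + 1) * f (e + Finsupp.single j 1)) := by
  rw [leftStar, totalDegree_X, psum_apply, Finset.sum_range_succ, Finset.sum_range_one,
    psmul_apply, psmul_apply]
  simp only [Function.iterate_zero, id_eq, Function.iterate_one, pow_zero, pow_one,
    Nat.factorial_zero, Nat.factorial_one, Nat.cast_one, div_one]
  rw [collapse_m0_L, collapse_step_L, one_mul]

lemma rightStar_X_apply (π : Matrix (Fin N) (Fin N) ℂ) (k : Fin N)
    (f : MvPowerSeries (Fin N) ℂ) (e : Fin N →₀ ℕ) :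
    rightStar N π f (X k) e = mulY N k f e
      + Complex.I * ∑ j : Fin N, π j k * ((((e j : ℕ) : ℂ) + 1) * f (e + Finsupp.single j 1)) := by
  rw [rightStar, totalDegree_X, psum_apply, Finset.sum_range_succ, Finset.sum_range_one,
    psmul_apply, psmul_apply]
  simp only [Function.iterate_zero, id_eq, Function.iterate_one, pow_zero, pow_one,
    Nat.factorial_zero, Nat.factorial_one, Nat.cast_one, div_one]
  rw [collapse_m0_R, collapse_step_R, one_mul]

end AuxB
section AuxC
open Finsupp

variable {N : ℕ}

lemma left_add_right (π : Matrix (Fin N) (Fin N) ℂ) (hanti : π.transpose = -π)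
    (k : Fin N) (f : MvPowerSeries (Fin N) ℂ) :
    leftStar N π (X k) f + rightStar N π f (X k) = (2 : ℂ) • mulY N k f := by
  funext e
  rw [padd_apply, psmul_apply, leftStar_X_apply, rightStar_X_apply]
  have hπ : ∀ j, π j k = -π k j := fun j => by
    have := congrFun (congrFun hanti k) j
    rw [Matrix.transpose_apply, Matrix.neg_apply] at this
    exact this
  have h2 : (∑ j : Fin N, π j k * ((((e j : ℕ) : ℂ) + 1) * f (e + Finsupp.single j 1)))
      = -∑ j : Fin N, π k j * ((((e j : ℕ) : ℂ) + 1) * f (e + Finsupp.single j 1)) := by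
    rw [← Finset.sum_neg_distrib]
    exact Finset.sum_congr rfl fun j _ => by rw [hπ j]; ring
  rw [h2]; ring

lemma stepT_neg (π : Matrix (Fin N) (Fin N) ℂ) (g : MvPowerSeries (Fin N ⊕ Fin N) ℂ) :
    stepT N π (-g) = -stepT N π g := by
  funext e
  show (∑ j : Fin N, ∑ k : Fin N, _ ) = -(∑ j : Fin N, ∑ k : Fin N, _)
  rw [← Finset.sum_neg_distrib]
  refine Finset.sum_congr rfl fun j _ => ?_
  rw [← Finset.sum_neg_distrib]
  refine Finset.sum_congr rfl fun k _ => ?_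
  show π j k * (_ * (_ * (-g) _)) = -(π j k * (_ * (_ * g _)))
  show π j k * (_ * (_ * (-(g _)))) = _
  ring

lemma stepT_iter_neg (π : Matrix (Fin N) (Fin N) ℂ) (m : ℕ)
    (g : MvPowerSeries (Fin N ⊕ Fin N) ℂ) :
    (stepT N π)^[m] (-g) = -(stepT N π)^[m] g := by
  induction m generalizing g with
  | zero => simp
  | succ m ih => rw [Function.iterate_succ_apply, Function.iterate_succ_apply,
      stepT_neg, ih]

lemma collapseT_neg (g : MvPowerSeries (Fin N ⊕ Fin N) ℂ) :
    collapseT N (-g) = -collapseT N g := by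
  funext e
  show (∑ p ∈ Finset.HasAntidiagonal.antidiagonal e, (-g) _) = -(∑ p ∈ Finset.HasAntidiagonal.antidiagonal e, g _)
  rw [← Finset.sum_neg_distrib]
  exact Finset.sum_congr rfl fun p _ => rfl

lemma rightStar_neg (π : Matrix (Fin N) (Fin N) ℂ) (f : MvPowerSeries (Fin N) ℂ)
    (a : MvPolynomial (Fin N) ℂ) :
    rightStar N π f (-a) = -rightStar N π f a := by
  rw [rightStar, rightStar, totalDegree_neg, ← Finset.sum_neg_distrib]
  refine Finset.sum_congr rfl fun m _ => ?_
  have hcoe : (((rename Sum.inr (-a) : MvPolynomial (Fin N ⊕ Fin N) ℂ)) :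
        MvPowerSeries (Fin N ⊕ Fin N) ℂ)
      = -(((rename Sum.inr a : MvPolynomial (Fin N ⊕ Fin N) ℂ)) :
        MvPowerSeries (Fin N ⊕ Fin N) ℂ) := by
    rw [map_neg]
    ext e
    simp [MvPolynomial.coeff_coe]
  rw [hcoe, mul_neg, stepT_iter_neg, collapseT_neg, smul_neg]

lemma parityMap_X (k : Fin N) : parityMap N (X k) = -X k := by
  rw [parityMap, aeval_X]

lemma moyal_X_X (π : Matrix (Fin N) (Fin N) ℂ) (a b : Fin N) :
    moyal N π (X a) (X b) = X a * X b + (Complex.I * π a b) • (1 : MvPolynomial (Fin N) ℂ) := by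
  classical
  rw [moyal, totalDegree_X, Finset.sum_range_succ, Finset.sum_range_one]
  have hstep : (moyalStep N π) ((rename Sum.inl (X a) : MvPolynomial (Fin N ⊕ Fin N) ℂ)
      * rename Sum.inr (X b)) = (π a b) • (1 : MvPolynomial (Fin N ⊕ Fin N) ℂ) := by
    rw [moyalStep, rename_X, rename_X]
    rw [LinearMap.sum_apply]
    rw [Finset.sum_congr rfl fun j (_ : j ∈ Finset.univ) => LinearMap.sum_apply _ _ _]
    simp only [LinearMap.smul_apply]
    have hjk : ∀ j k : Fin N,
        ((pderiv (Sum.inl j)).toLinearMap ∘ₗ (pderiv (Sum.inr k)).toLinearMap)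
          ((X (Sum.inl a) : MvPolynomial (Fin N ⊕ Fin N) ℂ) * X (Sum.inr b))
        = if j = a ∧ k = b then 1 else 0 := by
      intro j k
      rw [LinearMap.comp_apply]
      show (pderiv (Sum.inl j)) ((pderiv (Sum.inr k)) _) = _
      classical
      by_cases hj : j = a <;> by_cases hk : k = b <;>
        simp [pderiv_mul, pderiv_X, Pi.single_apply, hj, hk]
    rw [Finset.sum_congr rfl fun j (_ : j ∈ Finset.univ) =>
      Finset.sum_congr rfl fun k (_ : k ∈ Finset.univ) => by rw [hjk j k]]
    simp only [smul_ite, smul_zero, Finset.sum_ite_irrel, Finset.sum_const_zero,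
      Finset.sum_ite_eq', Finset.mem_univ, if_true]
    simp [ite_and, Finset.sum_ite_irrel, Finset.sum_const_zero, Finset.sum_ite_eq']
  have h0 : (rename (Sum.elim id id)) ((rename Sum.inl (X a) : MvPolynomial (Fin N ⊕ Fin N) ℂ)
      * rename Sum.inr (X b)) = X a * X b := by
    rw [map_mul, rename_X, rename_X, rename_X, rename_X]
    rfl
  simp only [pow_zero, pow_one, Module.End.one_apply]
  rw [hstep, h0, map_smul, map_one]
  norm_num [Nat.factorial]
  rw [smul_smul]

lemma moyal_X_sub (π : Matrix (Fin N) (Fin N) ℂ) (hanti : π.transpose = -π) (a b : Fin N) :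
    moyal N π (X a) (X b) - moyal N π (X b) (X a)
      = (2 * Complex.I * π a b) • (1 : MvPolynomial (Fin N) ℂ) := by
  rw [moyal_X_X, moyal_X_X]
  have hπ : π b a = -π a b := by
    have := congrFun (congrFun hanti a) b
    rw [Matrix.transpose_apply, Matrix.neg_apply] at this
    exact this
  rw [hπ, mul_comm (X b) (X a)]
  rw [show (2 * Complex.I * π a b) = (Complex.I * π a b) - (Complex.I * -π a b) by ring,
    sub_smul]
  abel

end AuxC
section AuxD
open Finsupp Equiv Equiv.Perm

variable {N : ℕ}

lemma mulY_zsum {ι : Type*} (s : Finset ι) (c : ι → ℤ) (F : ι → MvPowerSeries (Fin N) ℂ)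
    (k : Fin N) :
    mulY N k (∑ i ∈ s, c i • F i) = ∑ i ∈ s, c i • mulY N k (F i) := by
  funext e
  show (if 1 ≤ e k then (∑ i ∈ s, c i • F i) (e - Finsupp.single k 1) else 0)
      = (∑ i ∈ s, c i • mulY N k (F i)) e
  by_cases h : 1 ≤ e k
  · rw [if_pos h, psum_apply, psum_apply]
    refine Finset.sum_congr rfl fun i _ => ?_
    rw [pzsmul_apply, pzsmul_apply]
    show c i • F i (e - Finsupp.single k 1)
        = c i • (if 1 ≤ e k then F i (e - Finsupp.single k 1) else 0)
    rw [if_pos h]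
  · rw [if_neg h, psum_apply]
    symm
    refine Finset.sum_eq_zero fun i _ => ?_
    rw [pzsmul_apply]
    show c i • (if 1 ≤ e k then F i (e - Finsupp.single k 1) else 0) = 0
    rw [if_neg h, smul_zero]

lemma sum_plus_self_eq_zero {M : Type*} [AddCommGroup M] [Module ℂ M] {x : M}
    (h : x + x = 0) : x = 0 := by
  have h2 : (2 : ℂ) • x = 0 := by rw [two_smul]; exact h
  rcases smul_eq_zero.mp h2 with h' | h'
  · exact absurd h' two_ne_zero
  · exact h'

/-- vanishing of the antisymmetrized middle terms of the Hochschild differential -/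
lemma middle_vanish {p : ℕ} (π : Matrix (Fin (p+1)) (Fin (p+1)) ℂ) (hanti : π.transpose = -π)
    (γ : MultilinearMap ℂ (fun _ : Fin p => MvPolynomial (Fin (p+1)) ℂ)
      (MvPowerSeries (Fin (p+1)) ℂ))
    (hγ : IsNormalized (p+1) γ) (j : Fin p) :
    ∑ σ : Equiv.Perm (Fin (p + 1)), (Equiv.Perm.sign σ : ℤ) •
      ((-1 : ℤ) ^ (j : ℕ)) • γ (fun r : Fin p =>
        if (r : ℕ) < (j : ℕ) then X (σ r.castSucc)
        else if (r : ℕ) = (j : ℕ) then moyal (p+1) π (X (σ r.castSucc)) (X (σ r.succ))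
        else X (σ r.succ)) = 0 := by
  classical
  set s : Equiv.Perm (Fin (p + 1)) := Equiv.swap j.castSucc j.succ with hs
  have hcs_ne : (j.castSucc : Fin (p+1)) ≠ j.succ := (Fin.castSucc_lt_succ (i := j)).ne
  set G : Equiv.Perm (Fin (p + 1)) → MvPowerSeries (Fin (p+1)) ℂ := fun σ =>
    (Equiv.Perm.sign σ : ℤ) • ((-1 : ℤ) ^ (j : ℕ)) • γ (fun r : Fin p =>
      if (r : ℕ) < (j : ℕ) then X (σ r.castSucc)
      else if (r : ℕ) = (j : ℕ) then moyal (p+1) π (X (σ r.castSucc)) (X (σ r.succ))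
      else X (σ r.succ)) with hG
  show ∑ σ, G σ = 0
  have hpair : ∀ σ : Equiv.Perm (Fin (p + 1)), G σ + G (σ * s) = 0 := by
    intro σ
    set v : Fin p → MvPolynomial (Fin (p+1)) ℂ := fun r =>
      if (r : ℕ) < (j : ℕ) then X (σ r.castSucc)
      else if (r : ℕ) = (j : ℕ) then moyal (p+1) π (X (σ r.castSucc)) (X (σ r.succ))
      else X (σ r.succ) with hv
    set w : Fin p → MvPolynomial (Fin (p+1)) ℂ := fun r =>
      if (r : ℕ) < (j : ℕ) then X ((σ * s) r.castSucc)
      else if (r : ℕ) = (j : ℕ) then moyal (p+1) π (X ((σ * s) r.castSucc)) (X ((σ * s) r.succ))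
      else X ((σ * s) r.succ) with hw
    have hsign : ((Equiv.Perm.sign (σ * s) : ℤ)) = -(Equiv.Perm.sign σ : ℤ) := by
      rw [map_mul, hs, Equiv.Perm.sign_swap hcs_ne]
      simp
    have hweq : w = Function.update v j (moyal (p+1) π (X (σ j.succ)) (X (σ j.castSucc))) := by
      funext r
      by_cases hr : r = j
      · subst hr
        rw [Function.update_self]
        simp only [hw, lt_irrefl, if_false, if_true, if_pos rfl, Equiv.Perm.mul_apply, hs,
          Equiv.swap_apply_left, Equiv.swap_apply_right]
      · rw [Function.update_of_ne hr]
        simp only [hw, hv]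
        have hrv : (r : ℕ) ≠ (j : ℕ) := fun hc => hr (Fin.ext hc)
        by_cases hlt : (r : ℕ) < (j : ℕ)
        · rw [if_pos hlt, if_pos hlt]
          have : s r.castSucc = r.castSucc := by
            apply Equiv.swap_apply_of_ne_of_ne
            · exact fun hc => hr (Fin.castSucc_injective _ hc)
            · exact Fin.ne_of_val_ne (by simp only [Fin.coe_castSucc, Fin.val_succ]; omega)
          rw [Equiv.Perm.mul_apply, this]
        · rw [if_neg hlt, if_neg hlt, if_neg hrv, if_neg hrv]
          have hgt : (j : ℕ) < (r : ℕ) := by omega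
          have : s r.succ = r.succ := by
            apply Equiv.swap_apply_of_ne_of_ne
            · exact Fin.ne_of_val_ne (by simp only [Fin.coe_castSucc, Fin.val_succ]; omega)
            · exact fun hc => hr (Fin.succ_injective _ hc)
          rw [Equiv.Perm.mul_apply, this]
    have hveq : v = Function.update v j (moyal (p+1) π (X (σ j.castSucc)) (X (σ j.succ))) := by
      funext r
      by_cases hr : r = j
      · subst hr
        rw [Function.update_self]
        simp only [hv, lt_irrefl, if_false, if_true, if_pos rfl]
      · rw [Function.update_of_ne hr]
    have hdiff : γ v - γ w = 0 := by
      have h1 : γ v = γ (Function.update v j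
          (moyal (p+1) π (X (σ j.castSucc)) (X (σ j.succ)))) := by
        conv_lhs => rw [hveq]
      have h2 : γ w = γ (Function.update v j
          (moyal (p+1) π (X (σ j.succ)) (X (σ j.castSucc)))) := by rw [hweq]
      rw [h1, h2, ← MultilinearMap.map_update_sub, moyal_X_sub π hanti]
      rw [MultilinearMap.map_update_smul]
      rw [hγ _ ⟨j, Function.update_self _ _ _⟩, smul_zero]
    have : G (σ * s) = -G σ := by
      rw [hG]
      simp only []
      rw [hsign, neg_smul, ← hv]
      have hwid : (fun r : Fin p =>
          if (r : ℕ) < (j : ℕ) then X ((σ * s) r.castSucc)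
          else if (r : ℕ) = (j : ℕ) then moyal (p+1) π (X ((σ * s) r.castSucc)) (X ((σ * s) r.succ))
          else X ((σ * s) r.succ)) = w := rfl
      rw [hwid]
      have hγw : γ w = γ v := by
        have := sub_eq_zero.mp hdiff
        exact this.symm
      rw [hγw]
    rw [this, add_neg_cancel]
  have hre : ∑ σ : Equiv.Perm (Fin (p + 1)), G (σ * s) = ∑ σ, G σ :=
    Equiv.sum_comp (Equiv.mulRight s) G
  apply sum_plus_self_eq_zero
  calc (∑ σ, G σ) + ∑ σ, G σ = (∑ σ, G σ) + ∑ σ, G (σ * s) := by rw [hre]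
    _ = ∑ σ, (G σ + G (σ * s)) := by rw [Finset.sum_add_distrib]
    _ = 0 := by rw [Finset.sum_congr rfl fun σ _ => hpair σ, Finset.sum_const_zero]

end AuxD
section Main
open Equiv Equiv.Perm

lemma key_lemma (m : ℕ)
    (π : Matrix (Fin (2 * m + 2)) (Fin (2 * m + 2)) ℂ)
    (hanti : π.transpose = -π)
    (γ : MultilinearMap ℂ
      (fun _ : Fin (2 * m + 1) => MvPolynomial (Fin (2 * m + 2)) ℂ)
      (MvPowerSeries (Fin (2 * m + 2)) ℂ))
    (hγ : IsNormalized (2 * m + 2) γ) :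
    wedgeEval (2 * m + 2) (hochD (2 * m + 2) π γ) =
      (2 : ℂ) • ∑ k : Fin (2 * m + 2), ((-1 : ℤ) ^ (k : ℕ)) •
        mulY (2 * m + 2) k
          (∑ σ : Equiv.Perm (Fin (2 * m + 1)), (Equiv.Perm.sign σ : ℤ) •
            γ fun r => MvPolynomial.X (k.succAbove (σ r))) := by
  classical
  rw [wedgeEval]
  have hsplit : ∀ σ : Equiv.Perm (Fin (2*m+2)),
      (Equiv.Perm.sign σ : ℤ) • hochD (2*m+2) π γ (fun i => X (σ i))
      = ((Equiv.Perm.sign σ : ℤ) • leftStar (2*m+2) π (X (σ 0)) (γ fun i => X (σ i.succ))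
        + (Equiv.Perm.sign σ : ℤ) • (∑ j : Fin (2*m+1), ((-1:ℤ)^(j:ℕ)) •
            γ (fun r : Fin (2*m+1) =>
            if (r:ℕ) < (j:ℕ) then X (σ r.castSucc)
            else if (r:ℕ) = (j:ℕ) then moyal (2*m+2) π (X (σ r.castSucc)) (X (σ r.succ))
            else X (σ r.succ))))
        + (Equiv.Perm.sign σ : ℤ) • rightStar (2*m+2) π (γ fun i => X (σ i.castSucc))
            (parityMap (2*m+2) (X (σ (Fin.last (2*m+1))))) := by
    intro σ
    have h1 : ((-1:ℤ) ^ (2*m+1+1)) = 1 := Even.neg_one_pow ⟨m+1, by ring⟩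
    rw [hochD, h1, one_smul, ← smul_add, ← smul_add]
  rw [Finset.sum_congr rfl fun σ _ => hsplit σ, Finset.sum_add_distrib,
    Finset.sum_add_distrib]
  have hB : (∑ σ : Equiv.Perm (Fin (2*m+2)), (Equiv.Perm.sign σ : ℤ) •
      (∑ j : Fin (2*m+1), ((-1:ℤ)^(j:ℕ)) • γ (fun r : Fin (2*m+1) =>
        if (r:ℕ) < (j:ℕ) then X (σ r.castSucc)
        else if (r:ℕ) = (j:ℕ) then moyal (2*m+2) π (X (σ r.castSucc)) (X (σ r.succ))
        else X (σ r.succ)))) = 0 := by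
    rw [Finset.sum_congr rfl fun σ (_ : σ ∈ Finset.univ) => Finset.smul_sum]
    rw [Finset.sum_comm]
    exact Finset.sum_eq_zero fun j _ => middle_vanish π hanti γ hγ j
  rw [hB, add_zero]
  -- reindex the rightStar sum by the rotation
  have hfr : ∀ x : Fin (2*m+2), finRotate (2*m+2) x = x + 1 := fun x =>
    finRotate_succ_apply x
  have hsρ : (Equiv.Perm.sign (finRotate (2*m+2)) : ℤ) = -1 := by
    have h := sign_finRotate (2*m+2)
    have h2 : ((-1 : ℤˣ) ^ (2*m+1)) = -1 := Odd.neg_one_pow ⟨m, by ring⟩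
    rw [show 2*m+2-1 = 2*m+1 by omega, h2] at h
    have h' : Equiv.Perm.sign (finRotate (2*m+2)) = -1 := h
    rw [h', Units.coe_neg_one]
  have hC : (∑ σ : Equiv.Perm (Fin (2*m+2)), (Equiv.Perm.sign σ : ℤ) •
        rightStar (2*m+2) π (γ fun i => X (σ i.castSucc))
          (parityMap (2*m+2) (X (σ (Fin.last (2*m+1))))))
      = ∑ σ : Equiv.Perm (Fin (2*m+2)), (Equiv.Perm.sign σ : ℤ) •
          rightStar (2*m+2) π (γ fun i => X (σ i.succ)) (X (σ 0)) := by
    rw [← Equiv.sum_comp (Equiv.mulRight (finRotate (2*m+2)))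
      (fun σ : Equiv.Perm (Fin (2*m+2)) => (Equiv.Perm.sign σ : ℤ) •
        rightStar (2*m+2) π (γ fun i => X (σ i.castSucc))
          (parityMap (2*m+2) (X (σ (Fin.last (2*m+1))))))]
    refine Finset.sum_congr rfl fun σ _ => ?_
    simp only [Equiv.coe_mulRight]
    have hsign : ((Equiv.Perm.sign (σ * finRotate (2*m+2)) : ℤ))
        = -(Equiv.Perm.sign σ : ℤ) := by
      rw [map_mul]
      push_cast
      rw [hsρ]
      ring
    have harg : (fun i : Fin (2*m+1) => X (R := ℂ) ((σ * finRotate (2*m+2)) i.castSucc))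
        = fun i => X (σ i.succ) := by
      funext i
      rw [Equiv.Perm.mul_apply, hfr, Fin.coeSucc_eq_succ]
    have hlast : (σ * finRotate (2*m+2)) (Fin.last (2*m+1)) = σ 0 := by
      rw [Equiv.Perm.mul_apply, hfr, Fin.last_add_one]
    rw [hsign, harg, hlast, parityMap_X, rightStar_neg, smul_neg, neg_smul, neg_neg]
  rw [hC, ← Finset.sum_add_distrib]
  rw [Finset.sum_congr rfl fun σ (_ : σ ∈ Finset.univ) => by
    rw [← smul_add, left_add_right π hanti (σ 0) (γ fun i => X (σ i.succ))]]
  -- now decompose permutations by their value at 0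
  have hΦ0 : ∀ (k : Fin (2*m+2)) (τ : Equiv.Perm (Fin (2*m+1))),
      ((Fin.cycleRange k)⁻¹ * Equiv.Perm.decomposeFin.symm (0, τ)) 0 = k := by
    intro k τ
    rw [Equiv.Perm.mul_apply, Equiv.Perm.decomposeFin_symm_apply_zero]
    show (Fin.cycleRange k)⁻¹ 0 = k
    rw [Equiv.Perm.inv_def, Fin.cycleRange_symm_zero]
  have hΦs : ∀ (k : Fin (2*m+2)) (τ : Equiv.Perm (Fin (2*m+1))) (i : Fin (2*m+1)),
      ((Fin.cycleRange k)⁻¹ * Equiv.Perm.decomposeFin.symm (0, τ)) i.succ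
        = k.succAbove (τ i) := by
    intro k τ i
    rw [Equiv.Perm.mul_apply, Equiv.Perm.decomposeFin_symm_apply_succ, Equiv.swap_self]
    show (Fin.cycleRange k)⁻¹ ((Equiv.refl _) (τ i).succ) = _
    rw [Equiv.refl_apply, Equiv.Perm.inv_def, Fin.cycleRange_symm_succ]
  have hΦsign : ∀ (k : Fin (2*m+2)) (τ : Equiv.Perm (Fin (2*m+1))),
      ((Equiv.Perm.sign ((Fin.cycleRange k)⁻¹ * Equiv.Perm.decomposeFin.symm (0, τ))) : ℤ)
        = (-1)^(k:ℕ) * (Equiv.Perm.sign τ : ℤ) := by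
    intro k τ
    rw [map_mul, Equiv.Perm.sign_inv, Fin.sign_cycleRange, Equiv.Perm.decomposeFin.symm_sign,
      if_pos rfl, one_mul]
    push_cast
    ring
  have hbij : Function.Bijective (fun kτ : Fin (2*m+2) × Equiv.Perm (Fin (2*m+1)) =>
      (Fin.cycleRange kτ.1)⁻¹ * Equiv.Perm.decomposeFin.symm (0, kτ.2)) := by
    rw [Fintype.bijective_iff_injective_and_card]
    refine ⟨?_, by simp [Fintype.card_prod, Fintype.card_perm, Fintype.card_fin,
      Nat.factorial_succ]⟩
    rintro ⟨k, τ⟩ ⟨k', τ'⟩ h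
    have hk : k = k' := by
      have h0 := congrArg (fun σ : Equiv.Perm (Fin (2*m+2)) => σ 0) h
      simpa [hΦ0] using h0
    subst hk
    have h2 := mul_left_cancel h
    have h3 := Equiv.Perm.decomposeFin.symm.injective h2
    rw [Prod.mk.injEq] at h3
    rw [Prod.mk.injEq]
    exact ⟨rfl, h3.2⟩
  rw [← Fintype.sum_bijective _ hbij
    (fun kτ : Fin (2*m+2) × Equiv.Perm (Fin (2*m+1)) =>
      ((-1:ℤ)^(kτ.1:ℕ) * (Equiv.Perm.sign kτ.2 : ℤ)) •
        ((2:ℂ) • mulY (2*m+2) kτ.1 (γ fun i => X (kτ.1.succAbove (kτ.2 i)))))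
    (fun σ => (Equiv.Perm.sign σ : ℤ) • ((2:ℂ) • mulY (2*m+2) (σ 0) (γ fun i => X (σ i.succ))))
    (fun kτ => by
      have harg : (fun i : Fin (2*m+1) => X (R := ℂ)
          (((Fin.cycleRange kτ.1)⁻¹ * Equiv.Perm.decomposeFin.symm (0, kτ.2)) i.succ))
          = fun i => X (kτ.1.succAbove (kτ.2 i)) := funext fun i => by rw [hΦs]
      rw [hΦsign kτ.1 kτ.2, hΦ0 kτ.1 kτ.2, harg])]
  rw [Fintype.sum_prod_type]
  rw [Finset.smul_sum]
  refine Finset.sum_congr rfl fun k _ => ?_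
  rw [mulY_zsum, Finset.smul_sum, Finset.smul_sum]
  refine Finset.sum_congr rfl fun τ _ => ?_
  dsimp only
  rw [mul_smul, smul_comm ((Equiv.Perm.sign τ : ℤ)) (2:ℂ), smul_comm ((-1:ℤ)^(k:ℕ) : ℤ) (2:ℂ)]

end Main
/-- for any normalized Hochschild `(2n-1)`-cochain `γ` of the
Weyl algebra `A_n` (here the number of generators is `2n = 2m+2`, i.e. `n = m+1`,
so the cochain degree is `2n-1 = 2m+1`) with values in the dual bimodule, the
coboundary evaluated on the antisymmetrized chain `y^1 ∧ ⋯ ∧ y^{2n}` equals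
`2 Σ_k (-1)^{k+1} y^k · γ(y^1 ∧ ⋯ ∧ ŷ^k ∧ ⋯ ∧ y^{2n})` (ordinary multiplication
by `y^k`); in particular it vanishes at `y = 0`. -/
theorem coboundary_on_wedge (m : ℕ)
    (π : Matrix (Fin (2 * m + 2)) (Fin (2 * m + 2)) ℂ)
    (hanti : π.transpose = -π) (hnondeg : IsUnit π.det)
    (γ : MultilinearMap ℂ
      (fun _ : Fin (2 * m + 1) => MvPolynomial (Fin (2 * m + 2)) ℂ)
      (MvPowerSeries (Fin (2 * m + 2)) ℂ))
    (hγ : IsNormalized (2 * m + 2) γ) :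
    wedgeEval (2 * m + 2) (hochD (2 * m + 2) π γ) =
      (2 : ℂ) • ∑ k : Fin (2 * m + 2), ((-1 : ℤ) ^ (k : ℕ)) •
        mulY (2 * m + 2) k
          (∑ σ : Equiv.Perm (Fin (2 * m + 1)), (Equiv.Perm.sign σ : ℤ) •
            γ fun r => MvPolynomial.X (k.succAbove (σ r))) ∧
    MvPowerSeries.constantCoeff (σ := Fin (2 * m + 2)) (R := ℂ)
      (wedgeEval (2 * m + 2) (hochD (2 * m + 2) π γ)) = 0 := by

  have key := key_lemma m π hanti γ hγ
  refine ⟨key, ?_⟩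
  rw [key]
  have hz : ∀ (k : Fin (2*m+2)) (f : MvPowerSeries (Fin (2*m+2)) ℂ),
      MvPowerSeries.coeff (0 : (Fin (2*m+2)) →₀ ℕ) (mulY (2*m+2) k f) = 0 := by
    intro k f
    show mulY (2*m+2) k f 0 = 0
    simp [mulY]
  rw [← MvPowerSeries.coeff_zero_eq_constantCoeff]
  rw [map_smul, map_sum]
  rw [Finset.sum_congr rfl fun k (_ : k ∈ Finset.univ) => by
    rw [map_zsmul, hz k, smul_zero]]
  simp
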